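/- Let $X$ be a set with measure $\mu$, $E \subset X$, $0 < p < q < \infty$, $0 < \gamma < \infty$, $u : E \to \mathbb{R}$, $\mathbf{k} \in [0,\infty)$. Then $\|\min\{|u|, \mathbf{k}\}\|_{L^{q,\gamma}(E)} \le \left[\frac{\gamma}{q}\left(1 - \frac{p}{q}\right)\right]^{-1/\gamma} \sup_{0 < s \le \mathbf{k}^p}\big[s\,\mu(\{x \in E : |u(x)|^p > s\})\big]^{1/q}\, \mathbf{k}^{1-p/q} \le \left[\frac{\gamma}{q}\left(1 - \frac{p}{q}\right)\right]^{-1/\gamma} [u]_{L^p_w(E)}^{p/q}\, \mathbf{k}^{1-p/q}$. -/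

import Mathlib

open MeasureTheory Set

lemma lint_rpow {T α : ℝ} (hT : 0 < T) (hα : 0 < α) :
    ∫⁻ σ in Ioo (0:ℝ) T, ENNReal.ofReal (σ ^ (α - 1)) = ENNReal.ofReal (T ^ α / α) := by
  have hm1 : (-1:ℝ) < α - 1 := by linarith
  have hint : IntegrableOn (fun σ : ℝ => σ ^ (α - 1)) (Ioo 0 T) := by
    have := (intervalIntegrable_iff_integrableOn_Ioc_of_le hT.le).mp
      (intervalIntegral.intervalIntegrable_rpow' (a := 0) (b := T) hm1)
    exact this.mono_set Ioo_subset_Ioc_self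
  rw [← ofReal_integral_eq_lintegral_ofReal hint]
  · congr 1
    rw [← integral_Ioc_eq_integral_Ioo, ← intervalIntegral.integral_of_le hT.le,
      integral_rpow (Or.inl hm1)]
    rw [sub_add_cancel, Real.zero_rpow hα.ne', sub_zero]
  · filter_upwards [ae_restrict_mem measurableSet_Ioo] with σ hσ
    exact Real.rpow_nonneg hσ.1.le _

/-- `‖min(|u|,k)‖_{L^{q,γ}(E)} ≤ C · sup_{0<s≤k^p}[s μ(|u|^p>s)]^{1/q} · k^{1-p/q}
  ≤ C · [u]_{L^p_w(E)}^{p/q} · k^{1-p/q}`, with `C = (γ/q·(1-p/q))^{-1/γ}`. -/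
theorem lorentz_min_le {X : Type*} [MeasurableSpace X] (μ : Measure X) (E : Set X)
    (p q γ : ℝ) (hp : 0 < p) (hpq : p < q) (hγ : 0 < γ)
    (u : X → ℝ) (k : ℝ) (hk : 0 ≤ k) :
    (∫⁻ σ in Ioi (0:ℝ),
        (μ {x ∈ E | σ < (min |u x| k) ^ q}) ^ (γ / q) *
          ENNReal.ofReal (σ ^ (γ / q - 1))) ^ (1 / γ) ≤
      ENNReal.ofReal ((γ / q * (1 - p / q)) ^ (-(1 / γ))) *
        ((⨆ s ∈ Ioc (0:ℝ) (k ^ p), ENNReal.ofReal s * μ {x ∈ E | s < |u x| ^ p}) ^ (1 / q) *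
          ENNReal.ofReal k ^ (1 - p / q)) ∧
    ENNReal.ofReal ((γ / q * (1 - p / q)) ^ (-(1 / γ))) *
        ((⨆ s ∈ Ioc (0:ℝ) (k ^ p), ENNReal.ofReal s * μ {x ∈ E | s < |u x| ^ p}) ^ (1 / q) *
          ENNReal.ofReal k ^ (1 - p / q)) ≤
      ENNReal.ofReal ((γ / q * (1 - p / q)) ^ (-(1 / γ))) *
        (((⨆ t ∈ Ioi (0:ℝ), ENNReal.ofReal t * μ {x ∈ E | t < |u x| ^ p}) ^ (1 / p)) ^ (p / q) *
          ENNReal.ofReal k ^ (1 - p / q)) := by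
  have hq : 0 < q := hp.trans hpq
  have hpq1 : p / q < 1 := (div_lt_one hq).2 hpq
  have hpq0 : 0 < p / q := div_pos hp hq
  set α : ℝ := γ / q * (1 - p / q) with hα_def
  have hα : 0 < α := mul_pos (div_pos hγ hq) (by linarith)
  set S := ⨆ s ∈ Ioc (0:ℝ) (k ^ p), ENNReal.ofReal s * μ {x ∈ E | s < |u x| ^ p} with hS
  constructor
  · -- main inequality
    rcases hk.eq_or_lt with hk0 | hk0
    · -- k = 0 case : LHS = 0
      have : ∀ σ ∈ Ioi (0:ℝ),
          (μ {x ∈ E | σ < (min |u x| k) ^ q}) ^ (γ / q) *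
            ENNReal.ofReal (σ ^ (γ / q - 1)) = 0 := by
        intro σ hσ
        have hset : {x ∈ E | σ < (min |u x| k) ^ q} = ∅ := by
          ext x
          simp only [mem_setOf_eq, mem_empty_iff_false, iff_false, not_and]
          intro _
          rw [← hk0, min_eq_right (abs_nonneg _), Real.zero_rpow hq.ne']
          exact not_lt.2 (le_of_lt hσ)
        rw [hset, measure_empty, ENNReal.zero_rpow_of_pos (div_pos hγ hq), zero_mul]
      rw [setLIntegral_congr_fun measurableSet_Ioi this,
        lintegral_zero, ENNReal.zero_rpow_of_pos (by positivity)]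
      exact zero_le
    · -- k > 0 case
      have hkq : 0 < k ^ q := Real.rpow_pos_of_pos hk0 q
      -- pointwise bound
      have hbound : ∀ σ ∈ Ioi (0:ℝ),
          (μ {x ∈ E | σ < (min |u x| k) ^ q}) ^ (γ / q) *
            ENNReal.ofReal (σ ^ (γ / q - 1)) ≤
          (Ioo (0:ℝ) (k ^ q)).indicator
            (fun σ => S ^ (γ / q) * ENNReal.ofReal (σ ^ (α - 1))) σ := by
        intro σ hσ
        have hσ0 : (0:ℝ) < σ := hσ
        by_cases hσk : σ < k ^ q
        · rw [indicator_of_mem (mem_Ioo.mpr ⟨hσ0, hσk⟩)]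
          -- rewrite the set
          have hset : {x ∈ E | σ < (min |u x| k) ^ q}
              = {x ∈ E | σ ^ (p / q) < |u x| ^ p} := by
            ext x
            have hmin : (min |u x| k) ^ q = min (|u x| ^ q) (k ^ q) := by
              rcases le_total (|u x|) k with h | h
              · rw [min_eq_left h, min_eq_left (Real.rpow_le_rpow (abs_nonneg _) h hq.le)]
              · rw [min_eq_right h, min_eq_right (Real.rpow_le_rpow hk h hq.le)]
            simp only [mem_setOf_eq, hmin, lt_min_iff]
            constructor
            · rintro ⟨hxE, h1, _⟩
              refine ⟨hxE, ?_⟩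
              have := Real.rpow_lt_rpow hσ0.le h1 hpq0
              rwa [← Real.rpow_mul (abs_nonneg _), mul_div_cancel₀ _ hq.ne'] at this
            · rintro ⟨hxE, h1⟩
              refine ⟨hxE, ?_, hσk⟩
              by_contra hcon
              push_neg at hcon
              have := Real.rpow_le_rpow (Real.rpow_nonneg (abs_nonneg _) q) hcon
                hpq0.le
              rw [← Real.rpow_mul (abs_nonneg _), mul_div_cancel₀ _ hq.ne'] at this
              exact absurd h1 (not_lt.2 this)
          rw [hset]
          set s : ℝ := σ ^ (p / q) with hs_def
          have hs0 : 0 < s := Real.rpow_pos_of_pos hσ0 _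
          have hskp : s ≤ k ^ p := by
            have h1 := Real.rpow_le_rpow hσ0.le hσk.le hpq0.le
            rw [← Real.rpow_mul hk] at h1
            rwa [show q * (p / q) = p by field_simp] at h1
          have hmem : s ∈ Ioc (0:ℝ) (k ^ p) := ⟨hs0, hskp⟩
          have hμle : μ {x ∈ E | s < |u x| ^ p} ≤ S / ENNReal.ofReal s := by
            rw [ENNReal.le_div_iff_mul_le (Or.inl (by simp [hs0]))
              (Or.inl ENNReal.ofReal_ne_top)]
            rw [mul_comm]
            exact le_biSup (fun t => ENNReal.ofReal t * μ {x ∈ E | t < |u x| ^ p}) hmem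
          calc (μ {x ∈ E | s < |u x| ^ p}) ^ (γ / q) * ENNReal.ofReal (σ ^ (γ / q - 1))
              ≤ (S / ENNReal.ofReal s) ^ (γ / q) * ENNReal.ofReal (σ ^ (γ / q - 1)) := by
                gcongr
            _ = S ^ (γ / q) * ENNReal.ofReal (σ ^ (α - 1)) := by
                rw [ENNReal.div_rpow_of_nonneg _ _ (div_pos hγ hq).le,
                  div_eq_mul_inv, mul_assoc]
                congr 1
                rw [ENNReal.ofReal_rpow_of_pos hs0,
                  ← ENNReal.ofReal_inv_of_pos (Real.rpow_pos_of_pos hs0 _),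
                  ← ENNReal.ofReal_mul (by positivity)]
                congr 1
                rw [hs_def, ← Real.rpow_mul hσ0.le, ← Real.rpow_neg hσ0.le,
                  ← Real.rpow_add hσ0]
                congr 1
                rw [hα_def]; ring
        · rw [indicator_of_notMem (fun h => hσk h.2)]
          have hset : {x ∈ E | σ < (min |u x| k) ^ q} = ∅ := by
            ext x
            simp only [mem_setOf_eq, mem_empty_iff_false, iff_false, not_and]
            intro _
            have h1 : (min |u x| k) ^ q ≤ k ^ q :=
              Real.rpow_le_rpow (le_min (abs_nonneg _) hk) (min_le_right _ _) hq.le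
            exact not_lt.2 (h1.trans (not_lt.1 hσk))
          rw [hset, measure_empty, ENNReal.zero_rpow_of_pos (div_pos hγ hq), zero_mul]
      have hg : Measurable fun σ : ℝ => S ^ (γ / q) * ENNReal.ofReal (σ ^ (α - 1)) := by
        fun_prop
      have hI : (∫⁻ σ in Ioi (0:ℝ),
          (μ {x ∈ E | σ < (min |u x| k) ^ q}) ^ (γ / q) *
            ENNReal.ofReal (σ ^ (γ / q - 1)))
          ≤ S ^ (γ / q) * ENNReal.ofReal ((k ^ q) ^ α / α) := by
        calc ∫⁻ σ in Ioi (0:ℝ),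
            (μ {x ∈ E | σ < (min |u x| k) ^ q}) ^ (γ / q) *
              ENNReal.ofReal (σ ^ (γ / q - 1))
            ≤ ∫⁻ σ in Ioi (0:ℝ), (Ioo (0:ℝ) (k ^ q)).indicator
              (fun σ => S ^ (γ / q) * ENNReal.ofReal (σ ^ (α - 1))) σ :=
              setLIntegral_mono (hg.indicator measurableSet_Ioo) hbound
          _ = ∫⁻ σ in Ioo (0:ℝ) (k ^ q), S ^ (γ / q) * ENNReal.ofReal (σ ^ (α - 1)) := by
              rw [lintegral_indicator measurableSet_Ioo,
                Measure.restrict_restrict measurableSet_Ioo,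
                inter_eq_self_of_subset_left Ioo_subset_Ioi_self]
          _ = S ^ (γ / q) * ∫⁻ σ in Ioo (0:ℝ) (k ^ q), ENNReal.ofReal (σ ^ (α - 1)) :=
              lintegral_const_mul _ (by fun_prop)
          _ = S ^ (γ / q) * ENNReal.ofReal ((k ^ q) ^ α / α) := by rw [lint_rpow hkq hα]
      have hstep := ENNReal.rpow_le_rpow hI (by positivity : (0:ℝ) ≤ 1 / γ)
      refine hstep.trans_eq ?_
      have hXpos : 0 < (k ^ q) ^ α / α := div_pos (Real.rpow_pos_of_pos hkq α) hα
      rw [ENNReal.mul_rpow_of_nonneg _ _ (by positivity), ← ENNReal.rpow_mul,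
        ENNReal.ofReal_rpow_of_pos hXpos]
      have he : γ / q * (1 / γ) = 1 / q := by field_simp
      have hre : ((k ^ q) ^ α / α) ^ (1 / γ) = α ^ (-(1 / γ)) * k ^ (1 - p / q) := by
        rw [Real.div_rpow (Real.rpow_nonneg (Real.rpow_nonneg hk q) α) hα.le,
          ← Real.rpow_mul hk, ← Real.rpow_mul hk, Real.rpow_neg hα.le,
          div_eq_mul_inv, mul_comm]
        congr 2
        rw [hα_def]; field_simp
      rw [he, hre, ENNReal.ofReal_mul (by positivity),
        ← ENNReal.ofReal_rpow_of_pos hk0]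
      ring
  · -- second inequality
    have h2 : ((⨆ t ∈ Ioi (0:ℝ), ENNReal.ofReal t * μ {x ∈ E | t < |u x| ^ p}) ^ (1 / p))
        ^ (p / q)
        = (⨆ t ∈ Ioi (0:ℝ), ENNReal.ofReal t * μ {x ∈ E | t < |u x| ^ p}) ^ (1 / q) := by
      rw [← ENNReal.rpow_mul]
      congr 1
      field_simp
    rw [h2]
    gcongr
    exact biSup_mono fun s hs => hs.1
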